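/- arXiv:1907.04561 — 3 statements merged into one kernel-verified Lean document; each statement's English description precedes it below -/
import Mathlib

section
/- Let d ≥ 2 and let u_1, …, u_n ∈ ℝ^d be vectors such that u_1, …, u_{n−1} span ℝ^d and u_n = (0,0,…,0,1). Let Ω_n and Ω_{n−1} be the origin-symmetric zonotopes generated by u_1,…,u_n and by u_1,…,u_{n−1}, respectively. Then there exists a cylindric set Σ_n ⊂ ℝ^d whose base Π_n is a zonotope in ℝ^{d−1} with nonempty interior, such that: (i) every function F ∈ PW(Ω_n) can be represented as F(x,y) = G(x,y) + H(x,y)·sin(πy) for all (x,y) ∈ ℝ^{d−1} × ℝ, for some G ∈ PW(Σ_n) and some H ∈ PW(Ω_{n−1}); and (ii) conversely, for any G ∈ PW(Σ_n) and H ∈ PW(Ω_{n−1}), the function F defined by F(x,y) = G(x,y) + H(x,y)·sin(πy) belongs to PW(Ω_n). -/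
open MeasureTheory Complex
open scoped RealInnerProductSpace Pointwise

noncomputable section

/-- The origin-symmetric zonotope generated by the vectors `u 1, …, u n`. -/
def zonotope {V : Type*} [AddCommGroup V] [Module ℝ V] {n : ℕ} (u : Fin n → V) : Set V :=
  {x | ∃ t : Fin n → ℝ, (∀ j, t j ∈ Set.Icc (-(1/2) : ℝ) (1/2)) ∧ x = ∑ j, t j • u j}

/-- A set is a zonotope if it is the Minkowski sum of finitely many line segments. -/
def IsZonotope {V : Type*} [AddCommGroup V] [Module ℝ V] (A : Set V) : Prop :=
  ∃ (k : ℕ) (a b : Fin k → V),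
    A = {x | ∃ p : Fin k → V, (∀ j, p j ∈ segment ℝ (a j) (b j)) ∧ x = ∑ j, p j}

/-- A cylindric set `S ⊆ ℝ^{m} × ℝ` with base `B ⊆ ℝ^{m}`: over every point of the
bounded measurable base `B`, the fiber of `S` is an interval `[φ x, φ x + 1]` of length one,
where `φ` is a bounded measurable function on `B`. -/
def IsCylindric {m : ℕ} (S : Set (EuclideanSpace ℝ (Fin m) × ℝ))
    (B : Set (EuclideanSpace ℝ (Fin m))) : Prop :=
  Bornology.IsBounded S ∧ MeasurableSet S ∧ Bornology.IsBounded B ∧ MeasurableSet B ∧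
    ∃ φ : EuclideanSpace ℝ (Fin m) → ℝ, Measurable φ ∧ (∃ C : ℝ, ∀ x ∈ B, |φ x| ≤ C) ∧
      S = {p | p.1 ∈ B ∧ φ p.1 ≤ p.2 ∧ p.2 ≤ φ p.1 + 1}

/-- The Paley–Wiener space of a set `Ω ⊆ ℝ^{m} × ℝ`. -/
def PWprod {m : ℕ} (Ω : Set (EuclideanSpace ℝ (Fin m) × ℝ)) :
    Set (EuclideanSpace ℝ (Fin m) × ℝ → ℂ) :=
  {F | ∃ f : EuclideanSpace ℝ (Fin m) × ℝ → ℂ, MemLp f 2 (volume.restrict Ω) ∧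
    ∀ t, F t = ∫ p in Ω,
      f p * Complex.exp (-(2 * Real.pi * Complex.I * (((⟪ t.1, p.1 ⟫ : ℝ) + t.2 * p.2 : ℝ) : ℂ)))}


namespace ZonAux


variable {W : Type*} [NormedAddCommGroup W] [NormedSpace ℝ W] {k : ℕ}

lemma zonotope_eq_image (w : Fin k → W) :
    zonotope w = (fun t : Fin k → ℝ => ∑ j, t j • w j) ''
      (Set.univ.pi fun _ => Set.Icc (-(1/2) : ℝ) (1/2)) := by
  ext x
  constructor
  · rintro ⟨t, ht, rfl⟩
    exact ⟨t, fun j _ => ht j, rfl⟩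
  · rintro ⟨t, ht, rfl⟩
    exact ⟨t, fun j => ht j (Set.mem_univ j), rfl⟩

lemma isCompact_zonotope (w : Fin k → W) : IsCompact (zonotope w) := by
  rw [zonotope_eq_image]
  exact (isCompact_univ_pi fun _ => isCompact_Icc).image
    (continuous_finset_sum _ fun j _ => (continuous_apply j).smul continuous_const)

lemma convex_zonotope (w : Fin k → W) : Convex ℝ (zonotope w) := by
  rintro x ⟨t, ht, rfl⟩ y ⟨s, hs, rfl⟩ a b ha hb hab
  refine ⟨fun j => a * t j + b * s j, fun j => ?_, ?_⟩
  · have h1 := ht j; have h2 := hs j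
    simp only [Set.mem_Icc] at *
    constructor <;> nlinarith [h1.1, h1.2, h2.1, h2.2]
  · rw [Finset.smul_sum, Finset.smul_sum, ← Finset.sum_add_distrib]
    refine Finset.sum_congr rfl fun j _ => ?_
    rw [add_smul, mul_smul, mul_smul]

lemma mem_zonotope_succ {n : ℕ} (u : Fin (n+1) → W) (p : W) :
    p ∈ zonotope u ↔ ∃ q ∈ zonotope (fun j : Fin n => u j.castSucc),
      ∃ s ∈ Set.Icc (-(1/2) : ℝ) (1/2), p = q + s • u (Fin.last n) := by
  constructor
  · rintro ⟨t, ht, rfl⟩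
    refine ⟨∑ j : Fin n, t j.castSucc • u j.castSucc, ⟨fun j => t j.castSucc, fun j => ht _, rfl⟩,
      t (Fin.last n), ht _, ?_⟩
    rw [Fin.sum_univ_castSucc]
  · rintro ⟨q, ⟨t, ht, rfl⟩, s, hs, rfl⟩
    refine ⟨Fin.snoc t s, fun j => ?_, ?_⟩
    · induction j using Fin.lastCases with
      | last => simpa using hs
      | cast i => simpa using ht i
    · rw [Fin.sum_univ_castSucc]
      simp [Fin.snoc]


section Fib
variable {W : Type*} [NormedAddCommGroup W] [NormedSpace ℝ W]

def fib (Z : Set (W × ℝ)) (x : W) : Set ℝ := {y | (x, y) ∈ Z}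

lemma isCompact_fib {Z : Set (W × ℝ)} (hZ : IsCompact Z) (x : W) : IsCompact (fib Z x) := by
  have hcl : IsClosed (fib Z x) := hZ.isClosed.preimage (Continuous.prodMk_right x)
  refine (hZ.image continuous_snd).of_isClosed_subset hcl ?_
  rintro y hy
  exact ⟨(x, y), hy, rfl⟩

lemma convex_fib {Z : Set (W × ℝ)} (hZ : Convex ℝ Z) (x : W) : Convex ℝ (fib Z x) := by
  intro y1 h1 y2 h2 a b ha hb hab
  have h := hZ h1 h2 ha hb hab
  have heq : a • ((x, y1) : W × ℝ) + b • (x, y2) = (x, a • y1 + b • y2) := by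
    rw [Prod.smul_mk, Prod.smul_mk, Prod.mk_add_mk, ← add_smul, hab, one_smul]
  rw [heq] at h
  exact h

lemma fib_eq_Icc {Z : Set (W × ℝ)} (hZc : IsCompact Z) (hconv : Convex ℝ Z) {x : W}
    (hne : (fib Z x).Nonempty) :
    fib Z x = Set.Icc (sInf (fib Z x)) (sSup (fib Z x)) := by
  have hc := isCompact_fib hZc x
  apply Set.Subset.antisymm
  · intro y hy
    exact ⟨csInf_le hc.bddBelow hy, le_csSup hc.bddAbove hy⟩
  · exact (convex_fib hconv x).ordConnected.out (hc.sInf_mem hne) (hc.sSup_mem hne)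

lemma interval_sum (a b : ℝ) (hab : a ≤ b) :
    {y : ℝ | ∃ z ∈ Set.Icc a b, ∃ s ∈ Set.Icc (-(1/2) : ℝ) (1/2), y = z + s}
      = Set.Icc (a - 1/2) (b + 1/2) := by
  ext y
  constructor
  · rintro ⟨z, hz, s, hs, rfl⟩
    exact ⟨by linarith [hz.1, hs.1], by linarith [hz.2, hs.2]⟩
  · rintro ⟨h1, h2⟩
    rcases le_total y a with h | h
    · exact ⟨a, ⟨le_refl a, hab⟩, y - a, ⟨by linarith, by linarith⟩, by ring⟩
    · rcases le_total y b with h' | h'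
      · exact ⟨y, ⟨h, h'⟩, 0, ⟨by norm_num, by norm_num⟩, by ring⟩
      · exact ⟨b, ⟨hab, le_refl b⟩, y - b, ⟨by linarith, by linarith⟩, by ring⟩

end Fib

section Meas
variable {m : ℕ}

local notation "Dm" => (EuclideanSpace ℝ (Fin m) × ℝ)

/-- Vertical translation as a measurable equivalence. -/
def τ (m : ℕ) (c : ℝ) : (EuclideanSpace ℝ (Fin m) × ℝ) ≃ᵐ (EuclideanSpace ℝ (Fin m) × ℝ) :=
  (MeasurableEquiv.refl _).prodCongr (MeasurableEquiv.addRight c)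

lemma τ_apply (c : ℝ) (p : Dm) : τ m c p = (p.1, p.2 + c) := rfl

lemma measurePreserving_τ (c : ℝ) : MeasurePreserving (τ m c) volume volume := by
  rw [Measure.volume_eq_prod]
  exact (MeasurePreserving.id volume).prod (measurePreserving_add_right volume c)

lemma integral_shift (X : Dm → ℂ) (c : ℝ) :
    ∫ p : Dm, X (p.1, p.2 + c) = ∫ p, X p :=
  MeasurePreserving.integral_comp (measurePreserving_τ c) (τ m c).measurableEmbedding X

lemma memLp_shift {X : Dm → ℂ} (hX : MemLp X 2 volume) (c : ℝ) :
    MemLp (fun p : Dm => X (p.1, p.2 + c)) 2 volume :=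
  hX.comp_measurePreserving (measurePreserving_τ c)

lemma integrable_shift {X : Dm → ℂ} (hX : Integrable X volume) (c : ℝ) :
    Integrable (fun p : Dm => X (p.1, p.2 + c)) volume := by
  have := (integrable_map_equiv (τ m c) X).mp (by rwa [(measurePreserving_τ (m := m) c).map_eq])
  exact this

/-- The Paley–Wiener kernel. -/
def K (t p : EuclideanSpace ℝ (Fin m) × ℝ) : ℂ :=
  Complex.exp (-(2 * Real.pi * Complex.I * (((⟪ t.1, p.1 ⟫ : ℝ) + t.2 * p.2 : ℝ) : ℂ)))

lemma K_norm (t p : Dm) : ‖K t p‖ = 1 := by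
  rw [K, Complex.norm_exp]
  have : (-(2 * (Real.pi : ℂ) * Complex.I * (((⟪ t.1, p.1 ⟫ : ℝ) + t.2 * p.2 : ℝ) : ℂ))).re = 0 := by
    simp [Complex.mul_re, Complex.mul_im]
  rw [this, Real.exp_zero]

lemma integrable_mulK {X : Dm → ℂ} (hX : Integrable X volume) :
    ∀ t : Dm, Integrable (fun p => X p * K t p) volume := by
  intro t
  have hre : Continuous fun p : Dm => ((⟪ t.1, p.1 ⟫ : ℝ) + t.2 * p.2 : ℝ) :=
    (continuous_const.inner continuous_fst).add (continuous_const.mul continuous_snd)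
  have hK : Continuous (K (m := m) t) := by
    apply Complex.continuous_exp.comp
    exact (continuous_const.mul (Complex.continuous_ofReal.comp hre)).neg
  have := hX.bdd_mul (f := K t) hK.aestronglyMeasurable (c := 1) (Filter.Eventually.of_forall fun p => le_of_eq (K_norm t p))
  simpa [mul_comm] using this

lemma K_shift (t : Dm) (x : EuclideanSpace ℝ (Fin m)) (y c : ℝ) :
    K t (x, y - c) = K t (x, y) * Complex.exp (2 * Real.pi * Complex.I * ((t.2 * c : ℝ) : ℂ)) := by
  rw [K, K, ← Complex.exp_add]
  congr 1
  push_cast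
  ring

lemma modulation {X : Dm → ℂ} (c : ℝ) (t : Dm) :
    ∫ p : Dm, X (p.1, p.2 + c) * K t p
      = Complex.exp (2 * Real.pi * Complex.I * ((t.2 * c : ℝ) : ℂ)) * ∫ p, X p * K t p := by
  have h1 : ∀ p : Dm, X (p.1, p.2 + c) * K t p
      = (fun q : Dm => X q * K t (q.1, q.2 - c)) (p.1, p.2 + c) := by
    intro p
    simp only [add_sub_cancel_right]
  calc ∫ p : Dm, X (p.1, p.2 + c) * K t p
      = ∫ p : Dm, (fun q : Dm => X q * K t (q.1, q.2 - c)) (p.1, p.2 + c) := by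
        exact integral_congr_ae (Filter.Eventually.of_forall h1)
    _ = ∫ q : Dm, (fun q : Dm => X q * K t (q.1, q.2 - c)) q :=
        integral_shift (fun q : Dm => X q * K t (q.1, q.2 - c)) c
    _ = ∫ q : Dm, X q * K t q * Complex.exp (2 * Real.pi * Complex.I * ((t.2 * c : ℝ) : ℂ)) := by
        refine integral_congr_ae (Filter.Eventually.of_forall fun q => ?_)
        show X q * K t (q.1, q.2 - c) = X q * K t q
          * Complex.exp (2 * Real.pi * Complex.I * ((t.2 * c : ℝ) : ℂ))
        rw [K_shift t q.1 q.2 c]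
        ring
    _ = _ := by rw [integral_mul_const, mul_comm]

end Meas


lemma sin_combine (a : ℝ) :
    (2 * Complex.I)⁻¹ * (Complex.exp (2 * Real.pi * Complex.I * ((a * (1/2) : ℝ) : ℂ))
      - Complex.exp (2 * Real.pi * Complex.I * ((a * (-(1/2)) : ℝ) : ℂ)))
      = ((Real.sin (Real.pi * a) : ℝ) : ℂ) := by
  rw [Complex.ofReal_sin, Complex.sin]
  have e1 : (2 * (Real.pi : ℂ) * Complex.I * ((a * (1/2) : ℝ) : ℂ))
      = ((Real.pi * a : ℝ) : ℂ) * Complex.I := by push_cast; ring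
  have e2 : (2 * (Real.pi : ℂ) * Complex.I * ((a * (-(1/2)) : ℝ) : ℂ))
      = -(((Real.pi * a : ℝ) : ℂ) * Complex.I) := by push_cast; ring
  rw [e1, e2]
  set b := ((Real.pi * a : ℝ) : ℂ)
  rw [show -(b * Complex.I) = -b * Complex.I by ring]
  field_simp
  ring_nf
  simp [Complex.I_sq]
  ring



lemma oneD (F : ℝ → ℂ) (α β : ℝ) (hαβ : α + 1 ≤ β) (N : ℕ) (hN : β < α + 1 + N)
    (hsupp : ∀ y, F y ≠ 0 → α ≤ y ∧ y ≤ β)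
    (h : ℝ → ℂ)
    (hh : ∀ z, h z = if α + 1/2 ≤ z ∧ z ≤ β - 1/2
        then (-(2*Complex.I)) * ∑ k ∈ Finset.range (N+1), F (z + (1/2 + (k : ℝ))) else 0)
    (y : ℝ) (hy : ¬(α ≤ y ∧ y ≤ α + 1)) :
    F y - (2*Complex.I)⁻¹ * (h (y + 1/2) - h (y - 1/2)) = 0 := by
  have hF0 : ∀ y', ¬(α ≤ y' ∧ y' ≤ β) → F y' = 0 := by
    intro y' hy'
    by_contra hne
    exact hy' (hsupp y' hne)
  have hinv : (2*Complex.I)⁻¹ * (-(2*Complex.I)) = -1 := by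
    field_simp
  rw [not_and_or] at hy
  push_neg at hy
  rcases hy with hy | hy
  · -- y < α
    have h1 : h (y + 1/2) = 0 := by rw [hh]; rw [if_neg]; rintro ⟨c1, -⟩; linarith
    have h2 : h (y - 1/2) = 0 := by rw [hh]; rw [if_neg]; rintro ⟨c1, -⟩; linarith
    have h3 : F y = 0 := hF0 y (by rintro ⟨c1, -⟩; linarith)
    rw [h1, h2, h3]; ring
  · -- α + 1 < y
    rcases le_or_gt y β with hyβ | hyβ
    · -- α + 1 < y ≤ β
      have hm : h (y - 1/2) = (-(2*Complex.I)) * ∑ k ∈ Finset.range (N+1), F (y + (k : ℝ)) := by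
        rw [hh, if_pos ⟨by linarith, by linarith⟩]
        congr 1
        refine Finset.sum_congr rfl fun k _ => ?_
        congr 1; ring
      rcases le_or_gt y (β - 1) with hyb | hyb
      · -- can use upper window too
        have hp : h (y + 1/2) = (-(2*Complex.I)) * ∑ k ∈ Finset.range (N+1), F (y + 1 + (k : ℝ)) := by
          rw [hh, if_pos ⟨by linarith, by linarith⟩]
          congr 1
          refine Finset.sum_congr rfl fun k _ => ?_
          congr 1; ring
        rw [hp, hm, ← mul_sub, ← mul_assoc, hinv]
        have hsum : ∑ k ∈ Finset.range (N+1), F (y + (k : ℝ))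
            = F y + ∑ k ∈ Finset.range N, F (y + 1 + (k : ℝ)) := by
          rw [Finset.sum_range_succ']
          have h0 : F (y + ((0:ℕ) : ℝ)) = F y := by norm_num
          have hs : ∑ k ∈ Finset.range N, F (y + ((k + 1 : ℕ) : ℝ))
              = ∑ k ∈ Finset.range N, F (y + 1 + (k : ℝ)) :=
            Finset.sum_congr rfl fun k _ => by congr 1; push_cast; ring
          rw [h0, hs, add_comm]
        have hsum2 : ∑ k ∈ Finset.range (N+1), F (y + 1 + (k : ℝ))
            = ∑ k ∈ Finset.range N, F (y + 1 + (k : ℝ)) + F (y + 1 + (N : ℝ)) := by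
          rw [Finset.sum_range_succ]
        have hlast : F (y + 1 + (N : ℝ)) = 0 :=
          hF0 _ (by rintro ⟨-, c2⟩; linarith)
        rw [hsum, hsum2, hlast]
        ring
      · -- β - 1 < y ≤ β : upper window closed
        have hp : h (y + 1/2) = 0 := by
          rw [hh, if_neg]; rintro ⟨-, c2⟩; linarith
        rw [hp, hm]
        have hsum : ∑ k ∈ Finset.range (N+1), F (y + (k : ℝ))
            = F y + ∑ k ∈ Finset.range N, F (y + 1 + (k : ℝ)) := by
          rw [Finset.sum_range_succ']
          have h0 : F (y + ((0:ℕ) : ℝ)) = F y := by norm_num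
          have hs : ∑ k ∈ Finset.range N, F (y + ((k + 1 : ℕ) : ℝ))
              = ∑ k ∈ Finset.range N, F (y + 1 + (k : ℝ)) :=
            Finset.sum_congr rfl fun k _ => by congr 1; push_cast; ring
          rw [h0, hs, add_comm]
        have hz : ∀ k ∈ Finset.range N, F (y + 1 + (k : ℝ)) = 0 := by
          intro k _
          refine hF0 _ ?_
          rintro ⟨-, c2⟩
          have : (0:ℝ) ≤ (k:ℝ) := Nat.cast_nonneg k
          linarith
        rw [hsum, Finset.sum_congr rfl hz, Finset.sum_const, smul_zero]
        rw [zero_sub, mul_neg, ← mul_assoc, hinv]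
        ring
    · -- y > β
      have h1 : h (y + 1/2) = 0 := by rw [hh, if_neg]; rintro ⟨-, c2⟩; linarith
      have h2 : h (y - 1/2) = 0 := by rw [hh, if_neg]; rintro ⟨-, c2⟩; linarith
      have h3 : F y = 0 := hF0 y (by rintro ⟨-, c2⟩; linarith)
      rw [h1, h2, h3]; ring


end ZonAux

open ZonAux

set_option maxHeartbeats 2000000 in
theorem decomposition_PW_zonotope
    (m n : ℕ) (hm : 1 ≤ m) (u : Fin (n + 1) → EuclideanSpace ℝ (Fin m) × ℝ)
    (hspan : Submodule.span ℝ (Set.range (fun j : Fin n => u j.castSucc)) = ⊤)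
    (hlast : u (Fin.last n) = (0, 1)) :
    ∃ (S : Set (EuclideanSpace ℝ (Fin m) × ℝ)) (B : Set (EuclideanSpace ℝ (Fin m))),
      IsCylindric S B ∧ IsZonotope B ∧ (interior B).Nonempty ∧
      (∀ F ∈ PWprod (zonotope u), ∃ G ∈ PWprod S,
        ∃ H ∈ PWprod (zonotope (fun j : Fin n => u j.castSucc)),
        ∀ p : EuclideanSpace ℝ (Fin m) × ℝ,
          F p = G p + H p * ((Real.sin (Real.pi * p.2) : ℝ) : ℂ)) ∧
      (∀ G ∈ PWprod S, ∀ H ∈ PWprod (zonotope (fun j : Fin n => u j.castSucc)),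
        (fun p : EuclideanSpace ℝ (Fin m) × ℝ =>
          G p + H p * ((Real.sin (Real.pi * p.2) : ℝ) : ℂ)) ∈ PWprod (zonotope u)) := by
  classical
  set Ω : Set (EuclideanSpace ℝ (Fin m) × ℝ) := zonotope u with hΩdef
  set Ω' : Set (EuclideanSpace ℝ (Fin m) × ℝ) := zonotope (fun j : Fin n => u j.castSucc) with hΩ'def
  set v : Fin n → EuclideanSpace ℝ (Fin m) := fun j => (u j.castSucc).1 with hvdef
  set B : Set (EuclideanSpace ℝ (Fin m)) := zonotope v with hBdef
  -- basic structure
  have hΩc : IsCompact Ω := isCompact_zonotope u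
  have hΩ'c : IsCompact Ω' := isCompact_zonotope _
  have hBc : IsCompact B := isCompact_zonotope v
  have hΩconv : Convex ℝ Ω := convex_zonotope u
  have hΩ'conv : Convex ℝ Ω' := convex_zonotope _
  have hΩmeas : MeasurableSet Ω := hΩc.isClosed.measurableSet
  have hΩ'meas : MeasurableSet Ω' := hΩ'c.isClosed.measurableSet
  have hBmeas : MeasurableSet B := hBc.isClosed.measurableSet
  -- decomposition of Ω
  have hmem : ∀ p : EuclideanSpace ℝ (Fin m) × ℝ, p ∈ Ω ↔ ∃ q ∈ Ω', ∃ s ∈ Set.Icc (-(1/2) : ℝ) (1/2),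
      p = q + s • (((0 : EuclideanSpace ℝ (Fin m)), (1 : ℝ)) : EuclideanSpace ℝ (Fin m) × ℝ) := by
    intro p
    rw [hΩdef, hΩ'def, mem_zonotope_succ u p, hlast]
  have hsmul : ∀ s : ℝ, s • (((0 : EuclideanSpace ℝ (Fin m)), (1 : ℝ)) : EuclideanSpace ℝ (Fin m) × ℝ) = ((0 : EuclideanSpace ℝ (Fin m)), s) := by
    intro s
    rw [Prod.smul_mk, smul_zero, smul_eq_mul, mul_one]
  have hfibrel : ∀ x : EuclideanSpace ℝ (Fin m), fib Ω x
      = {y : ℝ | ∃ z ∈ fib Ω' x, ∃ s ∈ Set.Icc (-(1/2) : ℝ) (1/2), y = z + s} := by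
    intro x
    ext y
    simp only [fib, Set.mem_setOf_eq]
    rw [hmem (x, y)]
    constructor
    · rintro ⟨q, hq, s, hs, heq⟩
      rw [hsmul s] at heq
      obtain ⟨hx1, hy1⟩ := Prod.mk_inj.mp heq
      refine ⟨q.2, ?_, s, hs, by rw [hy1]⟩
      show (x, q.2) ∈ Ω'
      have : q = (x, q.2) := by
        rw [Prod.ext_iff]
        exact ⟨by rw [hx1]; simp, rfl⟩
      rwa [← this]
    · rintro ⟨z, hz, s, hs, rfl⟩
      exact ⟨(x, z), hz, s, hs, by rw [hsmul s]; rw [Prod.mk_add_mk, add_zero]⟩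
  -- projection facts
  have hmemB' : ∀ p : EuclideanSpace ℝ (Fin m) × ℝ, p ∈ Ω' → p.1 ∈ B := by
    rintro p ⟨t, ht, rfl⟩
    exact ⟨t, ht, by rw [Prod.fst_sum]; exact Finset.sum_congr rfl fun j _ => rfl⟩
  have hmemB : ∀ p : EuclideanSpace ℝ (Fin m) × ℝ, p ∈ Ω → p.1 ∈ B := by
    intro p hp
    obtain ⟨q, hq, s, hs, rfl⟩ := (hmem p).mp hp
    rw [hsmul s, Prod.fst_add]
    have := hmemB' q hq
    simpa using this
  have hproj : ∀ x : EuclideanSpace ℝ (Fin m), x ∈ B ↔ (fib Ω' x).Nonempty := by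
    intro x
    constructor
    · rintro ⟨t, ht, rfl⟩
      refine ⟨∑ j, t j • (u j.castSucc).2, ?_⟩
      show (∑ j, t j • v j, ∑ j, t j • (u j.castSucc).2) ∈ Ω'
      refine ⟨t, ht, ?_⟩
      rw [Prod.ext_iff]
      constructor
      · show (∑ j, t j • v j) = (∑ j, t j • u j.castSucc).1
        rw [Prod.fst_sum]
        exact Finset.sum_congr rfl fun j _ => rfl
      · show (∑ j, t j • (u j.castSucc).2) = (∑ j, t j • u j.castSucc).2
        rw [Prod.snd_sum]
        exact Finset.sum_congr rfl fun j _ => rfl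
    · rintro ⟨z, hz⟩
      exact hmemB' (x, z) hz
  -- the inf/sup of fibers
  set φ : EuclideanSpace ℝ (Fin m) → ℝ := fun x => sInf (fib Ω x) with hφdef
  set ψ : EuclideanSpace ℝ (Fin m) → ℝ := fun x => sSup (fib Ω x) with hψdef
  have hfibempty : ∀ x : EuclideanSpace ℝ (Fin m), x ∉ B → fib Ω x = ∅ := by
    intro x hx
    rw [Set.eq_empty_iff_forall_notMem]
    intro y hy
    exact hx (hmemB (x, y) hy)
  have hfib'empty : ∀ x : EuclideanSpace ℝ (Fin m), x ∉ B → fib Ω' x = ∅ := by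
    intro x hx
    rw [Set.eq_empty_iff_forall_notMem]
    intro y hy
    exact hx (hmemB' (x, y) hy)
  have key : ∀ x ∈ B, fib Ω x = Set.Icc (φ x) (ψ x)
      ∧ fib Ω' x = Set.Icc (φ x + 1/2) (ψ x - 1/2) ∧ φ x + 1 ≤ ψ x := by
    intro x hx
    have hne' : (fib Ω' x).Nonempty := (hproj x).mp hx
    have hfib' : fib Ω' x = Set.Icc (sInf (fib Ω' x)) (sSup (fib Ω' x)) :=
      fib_eq_Icc hΩ'c hΩ'conv hne'
    set α' := sInf (fib Ω' x)
    set β' := sSup (fib Ω' x)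
    have hab : α' ≤ β' := by
      obtain ⟨z, hz⟩ := hne'
      rw [hfib'] at hz
      exact le_trans hz.1 hz.2
    have hfibΩ : fib Ω x = Set.Icc (α' - 1/2) (β' + 1/2) := by
      rw [hfibrel x, hfib', interval_sum α' β' hab]
    have hφx : φ x = α' - 1/2 := by
      rw [hφdef]
      show sInf (fib Ω x) = α' - 1/2
      rw [hfibΩ, csInf_Icc (by linarith)]
    have hψx : ψ x = β' + 1/2 := by
      rw [hψdef]
      show sSup (fib Ω x) = β' + 1/2
      rw [hfibΩ, csSup_Icc (by linarith)]
    refine ⟨by rw [hφx, hψx]; exact hfibΩ, ?_, by rw [hφx, hψx]; linarith⟩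
    rw [hφx, hψx, hfib']
    congr 1 <;> ring
  -- global bound
  obtain ⟨R, hR0, hRsub⟩ := hΩc.isBounded.subset_closedBall_lt 0 0
  have hRx : ∀ p : EuclideanSpace ℝ (Fin m) × ℝ, p ∈ Ω → ‖p.1‖ ≤ R ∧ |p.2| ≤ R := by
    intro p hp
    have h1 : ‖p‖ ≤ R := by
      have := hRsub hp
      rwa [Metric.mem_closedBall, dist_zero_right] at this
    exact ⟨le_trans (norm_fst_le p) h1, le_trans (le_of_eq (Real.norm_eq_abs p.2).symm) (le_trans (norm_snd_le p) h1)⟩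
  have hφfib : ∀ x ∈ B, φ x ∈ fib Ω x := by
    intro x hx
    have hne : (fib Ω x).Nonempty := by
      obtain ⟨hfx, _, hle⟩ := key x hx
      rw [hfx]
      exact Set.nonempty_Icc.mpr (by linarith)
    exact (isCompact_fib hΩc x).sInf_mem hne
  have hψfib : ∀ x ∈ B, ψ x ∈ fib Ω x := by
    intro x hx
    have hne : (fib Ω x).Nonempty := ⟨φ x, hφfib x hx⟩
    exact (isCompact_fib hΩc x).sSup_mem hne
  have hφbound : ∀ x ∈ B, |φ x| ≤ R := fun x hx => (hRx (x, φ x) (hφfib x hx)).2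
  have hψbound : ∀ x ∈ B, |ψ x| ≤ R := fun x hx => (hRx (x, ψ x) (hψfib x hx)).2
  obtain ⟨N, hNgt⟩ := exists_nat_gt (2 * R)
  have hNx : ∀ x ∈ B, ψ x < φ x + 1 + N := by
    intro x hx
    have h1 := abs_le.mp (hφbound x hx)
    have h2 := abs_le.mp (hψbound x hx)
    linarith [h1.1, h2.2]
  -- measurability of φ
  have hφmeas : Measurable φ := by
    apply measurable_of_Iio
    intro r
    have heq : φ ⁻¹' (Set.Iio r)
        = ({x : EuclideanSpace ℝ (Fin m) | (0:ℝ) < r} ∩ Bᶜ)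
          ∪ ⋃ k : ℕ, Prod.fst '' (Ω ∩ {p : EuclideanSpace ℝ (Fin m) × ℝ | p.2 ≤ r - 1/((k : ℝ)+1)}) := by
      ext x
      simp only [Set.mem_preimage, Set.mem_Iio, Set.mem_union, Set.mem_inter_iff,
        Set.mem_compl_iff, Set.mem_iUnion, Set.mem_image, Set.mem_setOf_eq]
      constructor
      · intro hlt
        by_cases hxB : x ∈ B
        · right
          have hmemφ : φ x ∈ fib Ω x := hφfib x hxB
          obtain ⟨k, hk⟩ := exists_nat_one_div_lt (show (0:ℝ) < r - φ x by linarith)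
          exact ⟨k, (x, φ x), ⟨hmemφ, by simp only []; linarith⟩, rfl⟩
        · left
          refine ⟨?_, hxB⟩
          have h0 : φ x = 0 := by
            show sInf (fib Ω x) = 0
            rw [hfibempty x hxB, Real.sInf_empty]
          linarith
      · rintro (⟨hr, hxB⟩ | ⟨k, p, ⟨hpΩ, hple⟩, rfl⟩)
        · have h0 : φ x = 0 := by
            show sInf (fib Ω x) = 0
            rw [hfibempty x hxB, Real.sInf_empty]
          linarith
        · have h1 : p.2 ∈ fib Ω p.1 := hpΩ
          have h2 : φ p.1 ≤ p.2 := csInf_le (isCompact_fib hΩc p.1).bddBelow h1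
          have h3 : (0:ℝ) < 1/((k : ℝ)+1) := by positivity
          calc φ p.1 ≤ p.2 := h2
            _ ≤ r - 1/((k : ℝ)+1) := hple
            _ < r := by linarith
    rw [heq]
    refine MeasurableSet.union (MeasurableSet.inter ?_ hBmeas.compl) (MeasurableSet.iUnion fun k => ?_)
    · by_cases hr : (0:ℝ) < r
      · have : {x : EuclideanSpace ℝ (Fin m) | (0:ℝ) < r} = Set.univ := by ext x; simp [hr]
        rw [this]; exact MeasurableSet.univ
      · have : {x : EuclideanSpace ℝ (Fin m) | (0:ℝ) < r} = ∅ := by ext x; simp [hr]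
        rw [this]; exact MeasurableSet.empty
    · have hcomp : IsCompact (Ω ∩ {p : EuclideanSpace ℝ (Fin m) × ℝ | p.2 ≤ r - 1/((k : ℝ)+1)}) :=
        hΩc.inter_right (isClosed_le continuous_snd continuous_const)
      exact ((hcomp.image continuous_fst).isClosed).measurableSet
  -- the cylindric set
  set S : Set (EuclideanSpace ℝ (Fin m) × ℝ) := {p : EuclideanSpace ℝ (Fin m) × ℝ | p.1 ∈ B ∧ φ p.1 ≤ p.2 ∧ p.2 ≤ φ p.1 + 1} with hSdef
  have hSmeas : MeasurableSet S := by
    have hSeq : S = (Prod.fst ⁻¹' B) ∩ ({p : EuclideanSpace ℝ (Fin m) × ℝ | φ p.1 ≤ p.2} ∩ {p : EuclideanSpace ℝ (Fin m) × ℝ | p.2 ≤ φ p.1 + 1}) := rfl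
    rw [hSeq]
    refine (hBmeas.preimage measurable_fst).inter (MeasurableSet.inter ?_ ?_)
    · exact measurableSet_le (hφmeas.comp measurable_fst) measurable_snd
    · exact measurableSet_le measurable_snd ((hφmeas.comp measurable_fst).add measurable_const)
  have hSsub : S ⊆ B ×ˢ Set.Icc (-(R+1)) (R+1) := by
    rintro p ⟨hp1, hp2, hp3⟩
    have hb := abs_le.mp (hφbound p.1 hp1)
    exact ⟨hp1, by constructor <;> linarith [hb.1, hb.2]⟩
  have hScomp : IsCompact (B ×ˢ Set.Icc (-(R+1)) (R+1)) := hBc.prod isCompact_Icc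
  have hSbdd : Bornology.IsBounded S := hScomp.isBounded.subset hSsub
  have hSfin : volume S < ⊤ := lt_of_le_of_lt (measure_mono hSsub) hScomp.measure_lt_top
  have hΩfin : volume Ω < ⊤ := hΩc.measure_lt_top
  have hΩ'fin : volume Ω' < ⊤ := hΩ'c.measure_lt_top
  have hcyl : IsCylindric S B :=
    ⟨hSbdd, hSmeas, hBc.isBounded, hBmeas, φ, hφmeas, ⟨R, hφbound⟩, rfl⟩
  -- S ⊆ Ω
  have hSΩ : S ⊆ Ω := by
    rintro ⟨x, y⟩ ⟨hx, h1, h2⟩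
    obtain ⟨hfx, _, hle⟩ := key x hx
    have : y ∈ fib Ω x := by
      rw [hfx]
      exact ⟨h1, by linarith⟩
    exact this
  -- B is a zonotope
  have hzon : IsZonotope B := by
    refine ⟨n, fun j => (-(1/2) : ℝ) • v j, fun j => ((1/2) : ℝ) • v j, ?_⟩
    ext x
    constructor
    · rintro ⟨t, ht, rfl⟩
      refine ⟨fun j => t j • v j, fun j => ?_, rfl⟩
      refine ⟨1/2 - t j, 1/2 + t j, by linarith [(ht j).2], by linarith [(ht j).1], by ring, ?_⟩
      rw [smul_smul, smul_smul, ← add_smul]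
      congr 1
      ring
    · rintro ⟨p, hp, rfl⟩
      choose a b ha hb hab heq using hp
      refine ⟨fun j => (b j - a j) / 2, fun j => ?_, ?_⟩
      · simp only [Set.mem_Icc]
        constructor
        · linarith [ha j, hb j, hab j]
        · linarith [ha j, hb j, hab j]
      · refine Finset.sum_congr rfl fun j _ => ?_
        rw [← heq j, smul_smul, smul_smul, ← add_smul]
        congr 1
        ring
  -- interior of B is nonempty
  have hBint : (interior B).Nonempty := by
    have hBconv : Convex ℝ B := convex_zonotope v
    rw [Convex.interior_nonempty_iff_affineSpan_eq_top hBconv]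
    have h0B : (0 : EuclideanSpace ℝ (Fin m)) ∈ B := ⟨fun _ => 0, fun j => by norm_num, by simp⟩
    have hvB : ∀ j, (1/2 : ℝ) • v j ∈ B := by
      intro j
      refine ⟨fun i => if i = j then 1/2 else 0, fun i => ?_, ?_⟩
      · by_cases h : i = j <;> simp [h] <;> norm_num
      · have hite : ∀ i, (if i = j then (1/2:ℝ) else 0) • v i
            = if i = j then (1/2:ℝ) • v i else 0 := by
          intro i
          by_cases h : i = j <;> simp [h]
        rw [Finset.sum_congr rfl fun i _ => hite i,
          Finset.sum_ite_eq' Finset.univ j (fun i => (1/2:ℝ) • v i)]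
        simp
    have hspanv : Submodule.span ℝ (Set.range v) = ⊤ := by
      have hsurj : Function.Surjective (LinearMap.fst ℝ (EuclideanSpace ℝ (Fin m)) ℝ) := fun x => ⟨(x, 0), rfl⟩
      have : Set.range v = (LinearMap.fst ℝ (EuclideanSpace ℝ (Fin m)) ℝ) '' (Set.range fun j : Fin n => u j.castSucc) := by
        rw [← Set.range_comp]
        rfl
      rw [this, Submodule.span_image, hspan, Submodule.map_top, LinearMap.range_eq_top.mpr hsurj]
    rw [AffineSubspace.affineSpan_eq_top_iff_vectorSpan_eq_top_of_nonempty (k := ℝ) (V := EuclideanSpace ℝ (Fin m)) (P := EuclideanSpace ℝ (Fin m)) (hs := ⟨0, h0B⟩)]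
    rw [← top_le_iff, ← hspanv, Submodule.span_le]
    rintro _ ⟨j, rfl⟩
    have : v j = (2:ℝ) • ((1/2 : ℝ) • v j) := by rw [smul_smul]; norm_num
    rw [this]
    refine Submodule.smul_mem _ _ ?_
    have : (1/2 : ℝ) • v j = (1/2 : ℝ) • v j -ᵥ (0 : EuclideanSpace ℝ (Fin m)) := by simp
    rw [this]
    apply Submodule.subset_span
    exact Set.vsub_mem_vsub (hvB j) h0B
  -- finite measure instances
  haveI hfinΩ : IsFiniteMeasure (volume.restrict Ω) :=
    ⟨by rw [Measure.restrict_apply_univ]; exact hΩfin⟩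
  haveI hfinΩ' : IsFiniteMeasure (volume.restrict Ω') :=
    ⟨by rw [Measure.restrict_apply_univ]; exact hΩ'fin⟩
  haveI hfinS : IsFiniteMeasure (volume.restrict S) :=
    ⟨by rw [Measure.restrict_apply_univ]; exact hSfin⟩
  -- set-integral vs indicator-integral
  have hsetint : ∀ (T : Set (EuclideanSpace ℝ (Fin m) × ℝ)), MeasurableSet T →
      ∀ (X : EuclideanSpace ℝ (Fin m) × ℝ → ℂ) (t : EuclideanSpace ℝ (Fin m) × ℝ),
      ∫ p in T, X p * K t p = ∫ p, T.indicator X p * K t p := by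
    intro T hT X t
    rw [← integral_indicator hT]
    refine integral_congr_ae (Filter.Eventually.of_forall fun p => ?_)
    by_cases hp : p ∈ T
    · simp only [Set.indicator_of_mem hp]
    · simp only [Set.indicator_of_notMem hp, zero_mul]
  -- the modulation computation for the "derivative-like" part
  have hkint : ∀ (hb : EuclideanSpace ℝ (Fin m) × ℝ → ℂ), Integrable hb volume →
      ∀ t : EuclideanSpace ℝ (Fin m) × ℝ,
      ∫ p, ((2*Complex.I)⁻¹ * (hb (p.1, p.2 + 1/2) - hb (p.1, p.2 + (-(1/2))))) * K t p
        = (∫ p, hb p * K t p) * ((Real.sin (Real.pi * t.2) : ℝ) : ℂ) := by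
    intro hb hInt t
    have I1 : Integrable (fun p : EuclideanSpace ℝ (Fin m) × ℝ => hb (p.1, p.2 + 1/2) * K t p)
        volume := integrable_mulK (integrable_shift hInt (1/2)) t
    have I2 : Integrable (fun p : EuclideanSpace ℝ (Fin m) × ℝ =>
        hb (p.1, p.2 + (-(1/2))) * K t p) volume :=
      integrable_mulK (integrable_shift hInt (-(1/2))) t
    calc ∫ p, ((2*Complex.I)⁻¹ * (hb (p.1, p.2 + 1/2) - hb (p.1, p.2 + (-(1/2))))) * K t p
        = ∫ p, (2*Complex.I)⁻¹
            * (hb (p.1, p.2 + 1/2) * K t p - hb (p.1, p.2 + (-(1/2))) * K t p) := by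
          refine integral_congr_ae (Filter.Eventually.of_forall fun p => ?_)
          ring
      _ = (2*Complex.I)⁻¹
            * ∫ p, (hb (p.1, p.2 + 1/2) * K t p - hb (p.1, p.2 + (-(1/2))) * K t p) :=
          integral_const_mul _ _
      _ = (2*Complex.I)⁻¹ * ((∫ p, hb (p.1, p.2 + 1/2) * K t p)
            - ∫ p, hb (p.1, p.2 + (-(1/2))) * K t p) := by rw [integral_sub I1 I2]
      _ = (2*Complex.I)⁻¹
            * (Complex.exp (2 * Real.pi * Complex.I * ((t.2 * (1/2) : ℝ) : ℂ))
                * (∫ p, hb p * K t p)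
              - Complex.exp (2 * Real.pi * Complex.I * ((t.2 * (-(1/2)) : ℝ) : ℂ))
                * (∫ p, hb p * K t p)) := by
          rw [modulation (1/2) t, modulation (-(1/2)) t]
      _ = ((2*Complex.I)⁻¹
            * (Complex.exp (2 * Real.pi * Complex.I * ((t.2 * (1/2) : ℝ) : ℂ))
              - Complex.exp (2 * Real.pi * Complex.I * ((t.2 * (-(1/2)) : ℝ) : ℂ))))
            * ∫ p, hb p * K t p := by ring
      _ = _ := by rw [sin_combine t.2]; exact mul_comm _ _
  refine ⟨S, B, hcyl, hzon, hBint, ?_, ?_⟩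
  · -- direction (i)
    rintro F ⟨f, hf2, hFeq⟩
    set fb : EuclideanSpace ℝ (Fin m) × ℝ → ℂ := Ω.indicator f with hfbdef
    have hfb2 : MemLp fb 2 volume := (memLp_indicator_iff_restrict hΩmeas).mpr hf2
    have hfbInt : Integrable fb volume := by
      rw [hfbdef, integrable_indicator_iff hΩmeas]
      exact (hf2.mono_exponent one_le_two).integrable le_rfl
    set h' : EuclideanSpace ℝ (Fin m) × ℝ → ℂ := fun p =>
      (-(2*Complex.I)) * ∑ k ∈ Finset.range (N+1), fb (p.1, p.2 + (1/2 + (k : ℝ))) with hh'def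
    have hh'2 : MemLp h' 2 volume := by
      have hsum : MemLp (fun p : EuclideanSpace ℝ (Fin m) × ℝ =>
          ∑ k ∈ Finset.range (N+1), fb (p.1, p.2 + (1/2 + (k : ℝ)))) 2 volume :=
        memLp_finset_sum _ (fun k _ => memLp_shift hfb2 _)
      exact hsum.const_mul _
    set hbf : EuclideanSpace ℝ (Fin m) × ℝ → ℂ := Ω'.indicator h' with hhbdef
    have hhb2 : MemLp hbf 2 volume := hh'2.indicator hΩ'meas
    have hhbInt : Integrable hbf volume := by
      rw [hhbdef, integrable_indicator_iff hΩ'meas]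
      exact ((hh'2.restrict Ω').mono_exponent one_le_two).integrable le_rfl
    set kf : EuclideanSpace ℝ (Fin m) × ℝ → ℂ := fun p =>
      (2*Complex.I)⁻¹ * (hbf (p.1, p.2 + 1/2) - hbf (p.1, p.2 + (-(1/2)))) with hkdef
    have hk2 : MemLp kf 2 volume :=
      (((memLp_shift hhb2 (1/2)).sub (memLp_shift hhb2 (-(1/2)))).const_mul _)
    have hkInt : Integrable kf volume :=
      (((integrable_shift hhbInt (1/2)).sub (integrable_shift hhbInt (-(1/2)))).const_mul _)
    set g : EuclideanSpace ℝ (Fin m) × ℝ → ℂ := fun p => fb p - kf p with hgdef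
    have hg2 : MemLp g 2 volume := hfb2.sub hk2
    have hgInt : Integrable g volume := hfbInt.sub hkInt
    -- pointwise support claim
    have hg0 : ∀ p : EuclideanSpace ℝ (Fin m) × ℝ, p ∉ S → g p = 0 := by
      rintro ⟨x, y⟩ hp
      by_cases hxB : x ∈ B
      · obtain ⟨hfx, hfx', hle⟩ := key x hxB
        have hsupp : ∀ y', (fun y' => fb (x, y')) y' ≠ 0 → φ x ≤ y' ∧ y' ≤ ψ x := by
          intro y' hne
          have hmem : (x, y') ∈ Ω := by
            by_contra hc
            exact hne (Set.indicator_of_notMem hc f)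
          have : y' ∈ fib Ω x := hmem
          rw [hfx] at this
          exact this
        have hh : ∀ z, hbf (x, z) = if φ x + 1/2 ≤ z ∧ z ≤ ψ x - 1/2
            then (-(2*Complex.I)) * ∑ k ∈ Finset.range (N+1),
              (fun y' => fb (x, y')) (z + (1/2 + (k : ℝ))) else 0 := by
          intro z
          by_cases hz : (x, z) ∈ Ω'
          · have hzf : z ∈ fib Ω' x := hz
            rw [hfx'] at hzf
            rw [hhbdef, Set.indicator_of_mem hz, if_pos ⟨hzf.1, hzf.2⟩]
          · have hzf : ¬(φ x + 1/2 ≤ z ∧ z ≤ ψ x - 1/2) := by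
              intro hc
              apply hz
              show z ∈ fib Ω' x
              rw [hfx']
              exact hc
            rw [hhbdef, Set.indicator_of_notMem hz, if_neg hzf]
        have hy : ¬(φ x ≤ y ∧ y ≤ φ x + 1) := by
          intro hc
          exact hp ⟨hxB, hc.1, hc.2⟩
        have hone := oneD (fun y' => fb (x, y')) (φ x) (ψ x) hle N (hNx x hxB) hsupp
          (fun z => hbf (x, z)) hh y hy
        have hrew : y + (-(1/2) : ℝ) = y - 1/2 := by ring
        show fb (x, y) - (2*Complex.I)⁻¹ * (hbf (x, y + 1/2) - hbf (x, y + (-(1/2)))) = 0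
        rw [hrew]
        exact hone
      · have h1 : fb (x, y) = 0 := by
          refine Set.indicator_of_notMem ?_ f
          intro hc
          exact hxB (hmemB (x, y) hc)
        have h2 : ∀ z, hbf (x, z) = 0 := by
          intro z
          refine Set.indicator_of_notMem ?_ h'
          intro hc
          exact hxB (hmemB' (x, z) hc)
        show fb (x, y) - (2*Complex.I)⁻¹ * (hbf (x, y + 1/2) - hbf (x, y + (-(1/2)))) = 0
        rw [h1, h2, h2]
        ring
    have hgind : ∀ p, S.indicator g p = g p := by
      intro p
      by_cases hp : p ∈ S
      · rw [Set.indicator_of_mem hp]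
      · rw [Set.indicator_of_notMem hp, hg0 p hp]
    refine ⟨fun t => ∫ p in S, g p * K t p, ⟨g, hg2.restrict S, fun t => rfl⟩,
      fun t => ∫ p in Ω', h' p * K t p, ⟨h', hh'2.restrict Ω', fun t => rfl⟩, ?_⟩
    intro t
    have e1 : F t = ∫ p, fb p * K t p := (hFeq t).trans (hsetint Ω hΩmeas f t)
    have e2 : (∫ p in S, g p * K t p) = ∫ p, g p * K t p := by
      rw [hsetint S hSmeas g t]
      refine integral_congr_ae (Filter.Eventually.of_forall fun p => ?_)
      show S.indicator g p * K t p = g p * K t p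
      rw [hgind p]
    have e3 : (∫ p in Ω', h' p * K t p) * ((Real.sin (Real.pi * t.2) : ℝ) : ℂ)
        = ∫ p, kf p * K t p := by
      rw [hsetint Ω' hΩ'meas h' t]
      exact (hkint hbf hhbInt t).symm
    show F t = (∫ p in S, g p * K t p)
        + (∫ p in Ω', h' p * K t p) * ((Real.sin (Real.pi * t.2) : ℝ) : ℂ)
    rw [e1, e2, e3, ← integral_add (integrable_mulK hgInt t) (integrable_mulK hkInt t)]
    refine integral_congr_ae (Filter.Eventually.of_forall fun p => ?_)
    show fb p * K t p = (fb p - kf p) * K t p + kf p * K t p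
    ring
  · -- direction (ii)
    rintro G ⟨g, hg2, hGeq⟩ H ⟨h, hh2, hHeq⟩
    set gb : EuclideanSpace ℝ (Fin m) × ℝ → ℂ := S.indicator g with hgbdef
    set hbf : EuclideanSpace ℝ (Fin m) × ℝ → ℂ := Ω'.indicator h with hhbdef
    have hgb2 : MemLp gb 2 volume := (memLp_indicator_iff_restrict hSmeas).mpr hg2
    have hhb2 : MemLp hbf 2 volume := (memLp_indicator_iff_restrict hΩ'meas).mpr hh2
    have hgbInt : Integrable gb volume := by
      rw [hgbdef, integrable_indicator_iff hSmeas]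
      exact (hg2.mono_exponent one_le_two).integrable le_rfl
    have hhbInt : Integrable hbf volume := by
      rw [hhbdef, integrable_indicator_iff hΩ'meas]
      exact (hh2.mono_exponent one_le_two).integrable le_rfl
    set kf : EuclideanSpace ℝ (Fin m) × ℝ → ℂ := fun p =>
      (2*Complex.I)⁻¹ * (hbf (p.1, p.2 + 1/2) - hbf (p.1, p.2 + (-(1/2)))) with hkdef
    have hk2 : MemLp kf 2 volume :=
      (((memLp_shift hhb2 (1/2)).sub (memLp_shift hhb2 (-(1/2)))).const_mul _)
    have hkInt : Integrable kf volume :=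
      (((integrable_shift hhbInt (1/2)).sub (integrable_shift hhbInt (-(1/2)))).const_mul _)
    set f0 : EuclideanSpace ℝ (Fin m) × ℝ → ℂ := fun p => gb p + kf p with hf0def
    have hf02 : MemLp f0 2 volume := hgb2.add hk2
    have hf0Int : Integrable f0 volume := hgbInt.add hkInt
    -- f0 vanishes off Ω
    have hf00 : ∀ p : EuclideanSpace ℝ (Fin m) × ℝ, p ∉ Ω → f0 p = 0 := by
      rintro ⟨x, y⟩ hp
      have h1 : gb (x, y) = 0 := by
        refine Set.indicator_of_notMem ?_ g
        intro hc
        exact hp (hSΩ hc)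
      have h2 : hbf (x, y + 1/2) = 0 := by
        refine Set.indicator_of_notMem ?_ h
        intro hc
        have hxB : x ∈ B := hmemB' (x, y + 1/2) hc
        obtain ⟨hfx, hfx', hle⟩ := key x hxB
        have : y + 1/2 ∈ fib Ω' x := hc
        rw [hfx'] at this
        apply hp
        show y ∈ fib Ω x
        rw [hfx]
        exact ⟨by linarith [this.1], by linarith [this.2]⟩
      have h3 : hbf (x, y + (-(1/2))) = 0 := by
        refine Set.indicator_of_notMem ?_ h
        intro hc
        have hxB : x ∈ B := hmemB' (x, y + (-(1/2))) hc
        obtain ⟨hfx, hfx', hle⟩ := key x hxB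
        have : y + (-(1/2)) ∈ fib Ω' x := hc
        rw [hfx'] at this
        apply hp
        show y ∈ fib Ω x
        rw [hfx]
        exact ⟨by linarith [this.1], by linarith [this.2]⟩
      show gb (x, y) + (2*Complex.I)⁻¹ * (hbf (x, y + 1/2) - hbf (x, y + (-(1/2)))) = 0
      rw [h1, h2, h3]
      ring
    have hf0ind : ∀ p, Ω.indicator f0 p = f0 p := by
      intro p
      by_cases hp : p ∈ Ω
      · rw [Set.indicator_of_mem hp]
      · rw [Set.indicator_of_notMem hp, hf00 p hp]
    refine ⟨f0, hf02.restrict Ω, ?_⟩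
    intro t
    have e0 : (∫ p in Ω, f0 p * K t p) = ∫ p, f0 p * K t p := by
      rw [hsetint Ω hΩmeas f0 t]
      refine integral_congr_ae (Filter.Eventually.of_forall fun p => ?_)
      show Ω.indicator f0 p * K t p = f0 p * K t p
      rw [hf0ind p]
    have e1 : (∫ p, gb p * K t p) = G t :=
      ((hsetint S hSmeas g t).symm).trans (hGeq t).symm
    have e2 : (∫ p, kf p * K t p)
        = H t * ((Real.sin (Real.pi * t.2) : ℝ) : ℂ) := by
      have h4 : H t = ∫ p, hbf p * K t p := (hHeq t).trans (hsetint Ω' hΩ'meas h t)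
      rw [h4]
      exact hkint hbf hhbInt t
    show G t + H t * ((Real.sin (Real.pi * t.2) : ℝ) : ℂ) = ∫ p in Ω, f0 p * K t p
    rw [e0, ← e1, ← e2, ← integral_add (integrable_mulK hgbInt t) (integrable_mulK hkInt t)]
    refine integral_congr_ae (Filter.Eventually.of_forall fun p => ?_)
    show gb p * K t p + kf p * K t p = (gb p + kf p) * K t p
    ring
end
end

section
/- Let d ≥ 2 and let u_1, …, u_n ∈ ℝ^d be vectors such that u_1, …, u_{n−1} span ℝ^d and u_n = (0,0,…,0,1). Let Ω_n and Ω_{n−1} be the origin-symmetric zonotopes generated by u_1,…,u_n and by u_1,…,u_{n−1}, respectively. Then there exists a cylindric set Σ_n ⊂ Ω_n whose base is the image Π_n of Ω_{n−1} under the projection (x,y) ↦ x, such that: (i) every f ∈ L²(ℝ^d) vanishing almost everywhere outside Ω_n can be written as f(x,y) = g(x,y) + (h(x, y+1/2) − h(x, y−1/2))/(2i) for almost every (x,y) ∈ ℝ^{d−1} × ℝ, where g ∈ L²(ℝ^d) vanishes a.e. outside Σ_n and h ∈ L²(ℝ^d) vanishes a.e. outside Ω_{n−1}; and (ii) conversely,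 for any g, h ∈ L²(ℝ^d) vanishing a.e. outside Σ_n and outside Ω_{n−1} respectively, the function f defined by this formula vanishes a.e. outside Ω_n. -/
open MeasureTheory Complex
open scoped RealInnerProductSpace Pointwise

noncomputable section

section Aux

variable {V : Type*} [NormedAddCommGroup V] [NormedSpace ℝ V] {k : ℕ} (u : Fin k → V)

lemma zonotope_eq_image :
    zonotope u = (fun t : Fin k → ℝ => ∑ j, t j • u j) ''
      (Set.pi Set.univ fun _ => Set.Icc (-(1/2) : ℝ) (1/2)) := by
  ext x
  simp only [zonotope, Set.mem_setOf_eq, Set.mem_image, Set.mem_pi, Set.mem_univ, true_implies]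
  constructor
  · rintro ⟨t, ht, rfl⟩; exact ⟨t, ht, rfl⟩
  · rintro ⟨t, ht, rfl⟩; exact ⟨t, ht, rfl⟩

lemma zonotope_isCompact : IsCompact (zonotope u) := by
  rw [zonotope_eq_image]
  exact (isCompact_univ_pi fun _ => isCompact_Icc).image
    (continuous_finset_sum _ fun j _ => (continuous_apply j).smul continuous_const)

lemma zonotope_convex : Convex ℝ (zonotope u) := by
  rw [zonotope_eq_image]
  have hL : IsLinearMap ℝ (fun t : Fin k → ℝ => ∑ j, t j • u j) := by
    constructor
    · intro a b; simp [add_smul, Finset.sum_add_distrib]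
    · intro c a; simp [Finset.smul_sum, mul_smul]
  exact (convex_pi fun _ _ => convex_Icc _ _).is_linear_image hL

lemma zonotope_norm_le {p : V} (hp : p ∈ zonotope u) : ‖p‖ ≤ 2⁻¹ * ∑ j, ‖u j‖ := by
  obtain ⟨t, ht, rfl⟩ := hp
  calc ‖∑ j, t j • u j‖ ≤ ∑ j, ‖t j • u j‖ := norm_sum_le _ _
    _ ≤ ∑ j, 2⁻¹ * ‖u j‖ := by
        refine Finset.sum_le_sum fun j _ => ?_
        rw [norm_smul, Real.norm_eq_abs]
        have h1 := (ht j).1; have h2 := (ht j).2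
        have : |t j| ≤ 2⁻¹ := abs_le.mpr ⟨by linarith, by linarith⟩
        exact mul_le_mul_of_nonneg_right this (norm_nonneg _)
    _ = 2⁻¹ * ∑ j, ‖u j‖ := by rw [Finset.mul_sum]

end Aux

section Aux2

variable {m n : ℕ}

lemma mem_zonotope_succ_iff (u : Fin (n + 1) → EuclideanSpace ℝ (Fin m) × ℝ)
    (hlast : u (Fin.last n) = (0, 1)) (p : EuclideanSpace ℝ (Fin m) × ℝ) :
    p ∈ zonotope u ↔ ∃ q ∈ zonotope (fun j : Fin n => u j.castSucc),
      ∃ t ∈ Set.Icc (-(1/2) : ℝ) (1/2), p = (q.1, q.2 + t) := by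
  constructor
  · rintro ⟨t, ht, rfl⟩
    refine ⟨∑ j : Fin n, t j.castSucc • u j.castSucc,
      ⟨fun j => t j.castSucc, fun j => ht j.castSucc, rfl⟩, t (Fin.last n), ht _, ?_⟩
    rw [Fin.sum_univ_castSucc, hlast]
    ext <;> simp [Prod.smul_def]
  · rintro ⟨q, ⟨s, hs, rfl⟩, t, ht, rfl⟩
    refine ⟨Fin.snoc s t, fun j => ?_, ?_⟩
    · induction j using Fin.lastCases with
      | last => simpa using ht
      | cast j => simpa using hs j
    · rw [Fin.sum_univ_castSucc]
      simp only [Fin.snoc_castSucc, Fin.snoc_last, hlast]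
      ext <;> simp [Prod.smul_def]

end Aux2

set_option maxHeartbeats 1000000 in
theorem decomposition_L2_zonotope
    (m n : ℕ) (hm : 1 ≤ m) (u : Fin (n + 1) → EuclideanSpace ℝ (Fin m) × ℝ)
    (hspan : Submodule.span ℝ (Set.range (fun j : Fin n => u j.castSucc)) = ⊤)
    (hlast : u (Fin.last n) = (0, 1)) :
    ∃ S : Set (EuclideanSpace ℝ (Fin m) × ℝ),
      S ⊆ zonotope u ∧
      IsCylindric S (Prod.fst '' zonotope (fun j : Fin n => u j.castSucc)) ∧
      (∀ f : EuclideanSpace ℝ (Fin m) × ℝ → ℂ, MemLp f 2 volume →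
        (∀ᵐ p : EuclideanSpace ℝ (Fin m) × ℝ ∂volume, p ∉ zonotope u → f p = 0) →
        ∃ g h : EuclideanSpace ℝ (Fin m) × ℝ → ℂ,
          MemLp g 2 volume ∧ (∀ᵐ p : EuclideanSpace ℝ (Fin m) × ℝ ∂volume, p ∉ S → g p = 0) ∧
          MemLp h 2 volume ∧
          (∀ᵐ p : EuclideanSpace ℝ (Fin m) × ℝ ∂volume,
            p ∉ zonotope (fun j : Fin n => u j.castSucc) → h p = 0) ∧
          (∀ᵐ p : EuclideanSpace ℝ (Fin m) × ℝ ∂volume,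
            f p = g p + (h (p.1, p.2 + 1/2) - h (p.1, p.2 - 1/2)) / (2 * Complex.I))) ∧
      (∀ g h : EuclideanSpace ℝ (Fin m) × ℝ → ℂ, MemLp g 2 volume →
        (∀ᵐ p : EuclideanSpace ℝ (Fin m) × ℝ ∂volume, p ∉ S → g p = 0) →
        MemLp h 2 volume →
        (∀ᵐ p : EuclideanSpace ℝ (Fin m) × ℝ ∂volume,
          p ∉ zonotope (fun j : Fin n => u j.castSucc) → h p = 0) →
        ∀ᵐ p : EuclideanSpace ℝ (Fin m) × ℝ ∂volume, p ∉ zonotope u →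
          g p + (h (p.1, p.2 + 1/2) - h (p.1, p.2 - 1/2)) / (2 * Complex.I) = 0) := by
  classical
  set u' : Fin n → (EuclideanSpace ℝ (Fin m) × ℝ) := fun j : Fin n => u j.castSucc with hu'
  set Ω : Set (EuclideanSpace ℝ (Fin m) × ℝ) := zonotope u with hΩ
  set Ω' : Set (EuclideanSpace ℝ (Fin m) × ℝ) := zonotope u' with hΩ'
  set Pi : Set (EuclideanSpace ℝ (Fin m)) := Prod.fst '' Ω' with hPi
  -- basic compactness / bounds
  have hΩc : IsCompact Ω := zonotope_isCompact u
  have hΩ'c : IsCompact Ω' := zonotope_isCompact u'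
  have hΩm : MeasurableSet Ω := hΩc.isClosed.measurableSet
  have hΩ'm : MeasurableSet Ω' := hΩ'c.isClosed.measurableSet
  set R : ℝ := 2⁻¹ * ∑ j, ‖u j‖ with hRdef
  have hR0 : 0 ≤ R := by
    refine mul_nonneg (by norm_num) (Finset.sum_nonneg fun j _ => norm_nonneg _)
  have hΩR : ∀ p ∈ Ω, ‖p‖ ≤ R := fun p hp => zonotope_norm_le u hp
  have hΩ'R : ∀ p ∈ Ω', ‖p‖ ≤ R := by
    intro p hp
    refine le_trans (zonotope_norm_le u' hp) ?_
    rw [hRdef]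
    refine mul_le_mul_of_nonneg_left ?_ (by norm_num)
    rw [Fin.sum_univ_castSucc]
    exact le_add_of_nonneg_right (norm_nonneg _)
  have hΩ'snd : ∀ p ∈ Ω', |p.2| ≤ R := fun p hp =>
    le_trans (by simpa using norm_snd_le p) (hΩ'R p hp)
  -- membership splitting
  have hmem : ∀ p : (EuclideanSpace ℝ (Fin m) × ℝ), p ∈ Ω ↔ ∃ q ∈ Ω', ∃ t ∈ Set.Icc (-(1/2) : ℝ) (1/2),
      p = (q.1, q.2 + t) := mem_zonotope_succ_iff u hlast
  -- fibers of Ω'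
  set fib : EuclideanSpace ℝ (Fin m) → Set ℝ := fun x => {y : ℝ | (x, y) ∈ Ω'} with hfib
  have hfib_bdd : ∀ x, ∀ y ∈ fib x, |y| ≤ R := fun x y hy => hΩ'snd (x, y) hy
  have hfib_bddBelow : ∀ x, BddBelow (fib x) :=
    fun x => ⟨-R, fun y hy => (abs_le.mp (hfib_bdd x y hy)).1⟩
  have hfib_closed : ∀ x, IsClosed (fib x) := by
    intro x
    exact IsClosed.preimage (Continuous.prodMk_right x) hΩ'c.isClosed
  have hfib_conv : ∀ x, Convex ℝ (fib x) := by
    intro x y1 h1 y2 h2 c c' hc hc' hcc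
    have h := zonotope_convex u' h1 h2 hc hc' hcc
    have heq : c • ((x, y1) : EuclideanSpace ℝ (Fin m) × ℝ) + c' • (x, y2)
        = (x, c * y1 + c' * y2) := by
      rw [Prod.smul_mk, Prod.smul_mk, Prod.mk_add_mk, ← add_smul, hcc, one_smul]
      norm_num [smul_eq_mul]
    rwa [heq] at h
  have hfib_empty : ∀ x, x ∉ Pi → fib x = ∅ := by
    intro x hx
    ext y; simp only [Set.mem_empty_iff_false, iff_false]
    intro hy; exact hx ⟨(x, y), hy, rfl⟩
  set a : EuclideanSpace ℝ (Fin m) → ℝ := fun x => sInf (fib x) with ha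
  have ha_mem : ∀ x ∈ Pi, a x ∈ fib x := by
    rintro x ⟨p, hp, rfl⟩
    exact (hfib_closed p.1).csInf_mem ⟨p.2, hp⟩ (hfib_bddBelow p.1)
  have ha_le : ∀ x, ∀ y ∈ fib x, a x ≤ y := fun x y hy => csInf_le (hfib_bddBelow x) hy
  have ha_abs : ∀ x ∈ Pi, |a x| ≤ R := fun x hx => hfib_bdd x _ (ha_mem x hx)
  -- points of Ω lie above a - 1/2, below R + 1/2, and project into Pi
  have hΩfst : ∀ p : (EuclideanSpace ℝ (Fin m) × ℝ), p ∈ Ω → p.1 ∈ Pi := by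
    intro p hp
    obtain ⟨q, hq, t, ht, hpq⟩ := (hmem p).mp hp
    rw [hpq]; exact ⟨q, hq, rfl⟩
  have hΩ_lb : ∀ p : (EuclideanSpace ℝ (Fin m) × ℝ), p ∈ Ω → a p.1 - 1/2 ≤ p.2 := by
    intro p hp
    obtain ⟨q, hq, t, ht, hpq⟩ := (hmem p).mp hp
    have hq2 : q.2 ∈ fib q.1 := hq
    have := ha_le q.1 q.2 hq2
    rw [hpq]; simp only
    have := ht.1
    nlinarith [ha_le q.1 q.2 hq2, ht.1]
  have hΩ_ub : ∀ p : (EuclideanSpace ℝ (Fin m) × ℝ), p ∈ Ω → p.2 ≤ R + 1/2 := by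
    intro p hp
    obtain ⟨q, hq, t, ht, hpq⟩ := (hmem p).mp hp
    have h1 := (abs_le.mp (hΩ'snd q hq)).2
    rw [hpq]; simp only
    linarith [ht.2]
  -- measurability of a
  have hPic : IsCompact Pi := hΩ'c.image continuous_fst
  have hPim : MeasurableSet Pi := hPic.isClosed.measurableSet
  have ha_meas : Measurable a := by
    apply measurable_of_Iic
    intro c
    by_cases h0 : (0:ℝ) ≤ c
    · have : a ⁻¹' Set.Iic c = (Prod.fst '' (Ω' ∩ {p : (EuclideanSpace ℝ (Fin m) × ℝ) | p.2 ≤ c})) ∪ Piᶜ := by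
        ext x
        simp only [Set.mem_preimage, Set.mem_Iic, Set.mem_union, Set.mem_image,
          Set.mem_inter_iff, Set.mem_setOf_eq, Set.mem_compl_iff]
        constructor
        · intro hac
          by_cases hx : x ∈ Pi
          · exact Or.inl ⟨(x, a x), ⟨ha_mem x hx, hac⟩, rfl⟩
          · exact Or.inr hx
        · rintro (⟨p, ⟨hp, hpc⟩, rfl⟩ | hx)
          · exact le_trans (ha_le p.1 p.2 hp) hpc
          · have : fib x = ∅ := hfib_empty x hx
            simp only [ha, this, Real.sInf_empty]
            exact h0
      rw [this]
      exact ((hΩ'c.inter_right (isClosed_le continuous_snd continuous_const)).image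
        continuous_fst).isClosed.measurableSet.union hPim.compl
    · have : a ⁻¹' Set.Iic c = Prod.fst '' (Ω' ∩ {p : (EuclideanSpace ℝ (Fin m) × ℝ) | p.2 ≤ c}) := by
        ext x
        simp only [Set.mem_preimage, Set.mem_Iic, Set.mem_image,
          Set.mem_inter_iff, Set.mem_setOf_eq]
        constructor
        · intro hac
          by_cases hx : x ∈ Pi
          · exact ⟨(x, a x), ⟨ha_mem x hx, hac⟩, rfl⟩
          · exfalso
            have : fib x = ∅ := hfib_empty x hx
            rw [ha] at hac
            simp only [this, Real.sInf_empty] at hac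
            exact h0 (le_of_eq rfl |>.trans hac) |>.elim
        · rintro ⟨p, ⟨hp, hpc⟩, rfl⟩
          exact le_trans (ha_le p.1 p.2 hp) hpc
      rw [this]
      exact ((hΩ'c.inter_right (isClosed_le continuous_snd continuous_const)).image
        continuous_fst).isClosed.measurableSet
  -- the cylindric set
  set φ : EuclideanSpace ℝ (Fin m) → ℝ := fun x => a x - 1/2 with hφ
  set S : Set (EuclideanSpace ℝ (Fin m) × ℝ) := {p : (EuclideanSpace ℝ (Fin m) × ℝ) | p.1 ∈ Pi ∧ φ p.1 ≤ p.2 ∧ p.2 ≤ φ p.1 + 1} with hS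
  have hSsub : S ⊆ Ω := by
    rintro ⟨x, y⟩ ⟨hx, h1, h2⟩
    refine (hmem (x, y)).mpr ⟨(x, a x), ha_mem x hx, y - a x, ?_, ?_⟩
    · simp only [hφ] at h1 h2
      constructor <;> [linarith; linarith]
    · ext <;> simp
  have hSm : MeasurableSet S := by
    refine (hPim.preimage measurable_fst).inter ?_
    refine (measurableSet_le ((ha_meas.comp measurable_fst).sub measurable_const)
      measurable_snd).inter ?_
    exact measurableSet_le measurable_snd
      (((ha_meas.comp measurable_fst).sub measurable_const).add measurable_const)
  -- measure preserving vertical shifts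
  have hmp : ∀ c : ℝ, MeasurePreserving (fun p : (EuclideanSpace ℝ (Fin m) × ℝ) => (p.1, p.2 + c)) volume volume := by
    intro c
    rw [Measure.volume_eq_prod]
    exact (MeasurePreserving.id volume).prod (measurePreserving_add_right volume c)
  have hmp' : MeasurePreserving (fun p : (EuclideanSpace ℝ (Fin m) × ℝ) => (p.1, p.2 - 1/2)) volume volume := by
    rw [Measure.volume_eq_prod]
    exact (MeasurePreserving.id volume).prod (measurePreserving_sub_right volume (1/2))
  have hae_shift : ∀ (c : ℝ) (P : (EuclideanSpace ℝ (Fin m) × ℝ) → Prop), (∀ᵐ q : (EuclideanSpace ℝ (Fin m) × ℝ) ∂volume, P q) →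
      (∀ᵐ p : (EuclideanSpace ℝ (Fin m) × ℝ) ∂volume, P (p.1, p.2 + c)) := by
    intro c P hP
    rw [ae_iff] at hP ⊢
    exact (hmp c).quasiMeasurePreserving.preimage_null hP
  have hae_shift' : ∀ (P : (EuclideanSpace ℝ (Fin m) × ℝ) → Prop), (∀ᵐ q : (EuclideanSpace ℝ (Fin m) × ℝ) ∂volume, P q) →
      (∀ᵐ p : (EuclideanSpace ℝ (Fin m) × ℝ) ∂volume, P (p.1, p.2 - 1/2)) := by
    intro P hP
    rw [ae_iff] at hP ⊢
    exact hmp'.quasiMeasurePreserving.preimage_null hP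
  refine ⟨S, hSsub, ?_, ?_, ?_⟩
  · -- IsCylindric
    refine ⟨hΩc.isBounded.subset hSsub, hSm, hPic.isBounded, hPim, φ,
      ha_meas.sub measurable_const, ⟨R + 1/2, ?_⟩, rfl⟩
    intro x hx
    have := abs_le.mp (ha_abs x hx)
    rw [hφ]
    exact abs_le.mpr ⟨by linarith [this.1], by linarith [this.2]⟩
  · -- decomposition (part i)
    intro f hf hf0
    set f' : (EuclideanSpace ℝ (Fin m) × ℝ) → ℂ := Ω.indicator f with hf'def
    have hf' : MemLp f' 2 volume := hf.indicator hΩm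
    have hff' : f =ᵐ[volume] f' := by
      filter_upwards [hf0] with p hp
      by_cases hpΩ : p ∈ Ω
      · rw [hf'def, Set.indicator_of_mem hpΩ]
      · rw [hf'def, Set.indicator_of_notMem hpΩ, hp hpΩ]
    have hf'0 : ∀ p : (EuclideanSpace ℝ (Fin m) × ℝ), p ∉ Ω → f' p = 0 := fun p hp => Set.indicator_of_notMem hp f
    set K : ℕ := ⌈2 * R⌉₊ with hK
    have hKR : 2 * R ≤ K := Nat.le_ceil _
    set U : Set (EuclideanSpace ℝ (Fin m) × ℝ) := {p : (EuclideanSpace ℝ (Fin m) × ℝ) | a p.1 < p.2} with hU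
    have hUm : MeasurableSet U := measurableSet_lt (ha_meas.comp measurable_fst) measurable_snd
    set F : (EuclideanSpace ℝ (Fin m) × ℝ) → ℂ := fun p => -(∑ k ∈ Finset.range (K + 1), f' (p.1, p.2 + (1/2 + (k:ℝ))))
      with hF
    set Hfun : (EuclideanSpace ℝ (Fin m) × ℝ) → ℂ := U.indicator F with hHfun
    have hHmem : MemLp Hfun 2 volume := by
      refine MemLp.indicator hUm ?_
      refine MemLp.neg ?_
      exact memLp_finset_sum _ fun k _ => hf'.comp_measurePreserving (hmp (1/2 + (k:ℝ)))
    set h : (EuclideanSpace ℝ (Fin m) × ℝ) → ℂ := fun p => (2 * Complex.I) * Hfun p with hh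
    set g : (EuclideanSpace ℝ (Fin m) × ℝ) → ℂ := fun p => f' p - (Hfun (p.1, p.2 + 1/2) - Hfun (p.1, p.2 - 1/2)) with hg
    have hgmem : MemLp g 2 volume := by
      refine hf'.sub (MemLp.sub ?_ ?_)
      · exact hHmem.comp_measurePreserving (hmp (1/2))
      · exact hHmem.comp_measurePreserving hmp'
    have hhmem : MemLp h 2 volume := hHmem.const_mul _
    -- h vanishes outside Ω'
    have hh0 : ∀ p : (EuclideanSpace ℝ (Fin m) × ℝ), p ∉ Ω' → h p = 0 := by
      intro p hp
      suffices hz : Hfun p = 0 by simp only [hh, hz, mul_zero]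
      rw [hHfun]
      by_cases hpU : p ∈ U
      · rw [Set.indicator_of_mem hpU, hF]
        simp only [neg_eq_zero]
        refine Finset.sum_eq_zero fun k _ => ?_
        refine hf'0 _ fun hmem' => ?_
        obtain ⟨q, hq, t, ht, heq⟩ := (hmem _).mp hmem'
        rw [Prod.mk.injEq] at heq
        obtain ⟨h1, h2⟩ := heq
        have hq2 : q.2 ∈ fib p.1 := by rw [h1]; exact hq
        have hxPi : p.1 ∈ Pi := ⟨(p.1, q.2), hq2, rfl⟩
        have haf : a p.1 ∈ fib p.1 := ha_mem _ hxPi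
        have hk0 : (0:ℝ) ≤ (k:ℝ) := Nat.cast_nonneg k
        have hple : p.2 ≤ q.2 := by nlinarith [ht.2]
        have hpa : a p.1 < p.2 := hpU
        have : p.2 ∈ fib p.1 := by
          have := (hfib_conv p.1).ordConnected.out haf hq2
          exact this ⟨le_of_lt hpa, hple⟩
        exact hp this
      · rw [Set.indicator_of_notMem hpU]
    -- g vanishes outside S
    have hg0 : ∀ p : (EuclideanSpace ℝ (Fin m) × ℝ), p ∉ S → g p = 0 := by
      rintro ⟨x, y⟩ hpS
      by_cases hx : x ∈ Pi
      · by_cases hy1 : y + 1/2 < a x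
        · -- below the cylinder
          have hf0' : f' (x, y) = 0 := by
            refine hf'0 _ fun hmem' => ?_
            have := hΩ_lb (x, y) hmem'
            simp only at this
            linarith
          have hH1 : Hfun (x, y + 1/2) = 0 := by
            rw [hHfun, Set.indicator_of_notMem]
            simp only [hU, Set.mem_setOf_eq, not_lt]
            linarith
          have hH2 : Hfun (x, y - 1/2) = 0 := by
            rw [hHfun, Set.indicator_of_notMem]
            simp only [hU, Set.mem_setOf_eq, not_lt]
            linarith
          rw [hg]; simp only [hH1, hH2, hf0', sub_zero, sub_self]
        · by_cases hy2 : a x + 1/2 < y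
          · -- above the cylinder: telescoping
            set G : ℕ → ℂ := fun k => f' (x, y + (k:ℝ)) with hG
            have hH1 : Hfun (x, y + 1/2) = -(∑ k ∈ Finset.range (K + 1), G (k + 1)) := by
              rw [hHfun, Set.indicator_of_mem]
              · simp only [hF]
                congr 1
                refine Finset.sum_congr rfl fun k _ => ?_
                rw [show (y + 1/2 + (1/2 + (k:ℝ))) = y + ((k:ℝ) + 1) by ring]
                simp only [hG]
                push_cast
                ring_nf
              · simp only [hU, Set.mem_setOf_eq]
                linarith
            have hH2 : Hfun (x, y - 1/2) = -(∑ k ∈ Finset.range (K + 1), G k) := by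
              rw [hHfun, Set.indicator_of_mem]
              · simp only [hF]
                congr 1
                refine Finset.sum_congr rfl fun k _ => ?_
                rw [show (y - 1/2 + (1/2 + (k:ℝ))) = y + (k:ℝ) by ring]
              · simp only [hU, Set.mem_setOf_eq]
                linarith
            have htel : (∑ k ∈ Finset.range (K + 1), G (k + 1)) -
                (∑ k ∈ Finset.range (K + 1), G k) = G (K + 1) - G 0 := by
              rw [← Finset.sum_sub_distrib]
              exact Finset.sum_range_sub G (K + 1)
            have hG0 : G 0 = f' (x, y) := by rw [hG]; norm_num
            have hGtop : G (K + 1) = 0 := by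
              rw [hG]
              refine hf'0 _ fun hmem' => ?_
              have hub := hΩ_ub _ hmem'
              simp only at hub
              have haR := (abs_le.mp (ha_abs x hx)).1
              push_cast at hub
              linarith
            rw [hg]
            simp only [hH1, hH2]
            have : -(∑ k ∈ Finset.range (K + 1), G (k + 1)) -
                (-(∑ k ∈ Finset.range (K + 1), G k)) = -(G (K + 1) - G 0) := by
              rw [← htel]; ring
            rw [this, hGtop, hG0]
            ring
          · -- inside the cylinder: contradiction with p ∉ S
            exfalso
            push_neg at hy1 hy2
            refine hpS ⟨hx, ?_, ?_⟩ <;> simp only [hφ] <;> linarith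
      · -- x not in the base
        have hx0 : ∀ y' : ℝ, f' (x, y') = 0 := fun y' =>
          hf'0 _ fun hmem' => hx (hΩfst _ hmem')
        have hHx : ∀ y' : ℝ, Hfun (x, y') = 0 := by
          intro y'
          rw [hHfun, Set.indicator_apply]
          split
          · rw [hF]
            simp only [neg_eq_zero]
            exact Finset.sum_eq_zero fun k _ => hx0 _
          · rfl
        rw [hg]
        simp only [hx0, hHx, sub_zero, sub_self]
    refine ⟨g, h, hgmem, Filter.Eventually.of_forall hg0, hhmem,
      Filter.Eventually.of_forall hh0, ?_⟩
    have h2I : (2 * Complex.I) ≠ 0 := by simp [Complex.I_ne_zero]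
    have key : ∀ A B : ℂ, (2 * Complex.I * A - 2 * Complex.I * B) / (2 * Complex.I) = A - B := by
      intro A B; field_simp
    filter_upwards [hff'] with p hp
    rw [hp]
    simp only [hg, hh, key]
    ring
  · -- converse (part ii)
    intro g h hg hg0 hh hh0
    have h1 : ∀ᵐ p : (EuclideanSpace ℝ (Fin m) × ℝ) ∂volume,
        ((p.1, p.2 + 1/2) : (EuclideanSpace ℝ (Fin m) × ℝ)) ∉ Ω' → h (p.1, p.2 + 1/2) = 0 :=
      hae_shift (1/2) (fun q => q ∉ Ω' → h q = 0) hh0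
    have h2 : ∀ᵐ p : (EuclideanSpace ℝ (Fin m) × ℝ) ∂volume,
        ((p.1, p.2 - 1/2) : (EuclideanSpace ℝ (Fin m) × ℝ)) ∉ Ω' → h (p.1, p.2 - 1/2) = 0 :=
      hae_shift' (fun q => q ∉ Ω' → h q = 0) hh0
    filter_upwards [hg0, h1, h2] with p hpg hp1 hp2
    intro hpΩ
    have hgz : g p = 0 := hpg fun hpS => hpΩ (hSsub hpS)
    have hz1 : h (p.1, p.2 + 1/2) = 0 := by
      refine hp1 fun hmem' => hpΩ ?_
      refine (hmem p).mpr ⟨(p.1, p.2 + 1/2), hmem', -(1/2), by norm_num, ?_⟩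
      ext <;> simp
    have hz2 : h (p.1, p.2 - 1/2) = 0 := by
      refine hp2 fun hmem' => hpΩ ?_
      refine (hmem p).mpr ⟨(p.1, p.2 - 1/2), hmem', 1/2, by norm_num, ?_⟩
      ext <;> simp
    rw [hgz, hz1, hz2]
    simp
end
end

section
/- Let H be a separable complex Hilbert space and let (f_n)_{n ∈ ℕ} be a sequence in H. Then (f_n) is a Riesz basis of H (i.e., the image of an orthonormal basis of H under a bounded invertible linear operator on H) if and only if the following three conditions hold: (i) (f_n) is a complete system in H, i.e., its finite linear span is dense in H; (ii) for every f ∈ H, ∑_n |⟨f, f_n⟩|² < ∞; (iii) for every sequence of scalars (c_n) with ∑_n |c_n|² < ∞, there exists at least one f ∈ H satisfying ⟨f, f_n⟩ = c_n for all n. -/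
open MeasureTheory Complex
open scoped RealInnerProductSpace Pointwise

noncomputable section

/-- A family of vectors in a Hilbert space is a *Riesz basis* if it is the image of an
orthonormal (Hilbert) basis under a bounded invertible linear operator. -/
def IsRieszBasis {H : Type*} [NormedAddCommGroup H] [InnerProductSpace ℂ H] {ι : Type*}
    (f : ι → H) : Prop :=
  ∃ (e : HilbertBasis ι ℂ H) (T : H ≃L[ℂ] H), ∀ i, f i = T (e i)

lemma rpow_toReal_two (x : ℝ) : x ^ (2 : ENNReal).toReal = x ^ 2 := by
  rw [ENNReal.toReal_ofNat, show (2:ℝ) = ((2:ℕ):ℝ) by norm_num, Real.rpow_natCast]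

/-- The adjoint of a continuous linear equivalence between Hilbert spaces, as a
continuous linear equivalence. -/
def adjointEquiv {E F : Type*} [NormedAddCommGroup E] [InnerProductSpace ℂ E]
    [NormedAddCommGroup F] [InnerProductSpace ℂ F] [CompleteSpace E] [CompleteSpace F]
    (U : E ≃L[ℂ] F) : F ≃L[ℂ] E :=
  ContinuousLinearEquiv.equivOfInverse
    (ContinuousLinearMap.adjoint (U : E →L[ℂ] F))
    (ContinuousLinearMap.adjoint (U.symm : F →L[ℂ] E))
    (fun x => by
      rw [← ContinuousLinearMap.comp_apply, ← ContinuousLinearMap.adjoint_comp]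
      have h : (U : E →L[ℂ] F).comp (U.symm : F →L[ℂ] E) = ContinuousLinearMap.id ℂ F := by
        ext y; simp
      rw [h, ContinuousLinearMap.adjoint_id, ContinuousLinearMap.id_apply])
    (fun x => by
      rw [← ContinuousLinearMap.comp_apply, ← ContinuousLinearMap.adjoint_comp]
      have h : (U.symm : F →L[ℂ] E).comp (U : E →L[ℂ] F) = ContinuousLinearMap.id ℂ E := by
        ext y; simp
      rw [h, ContinuousLinearMap.adjoint_id, ContinuousLinearMap.id_apply])

lemma adjointEquiv_apply {E F : Type*} [NormedAddCommGroup E] [InnerProductSpace ℂ E]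
    [NormedAddCommGroup F] [InnerProductSpace ℂ F] [CompleteSpace E] [CompleteSpace F]
    (U : E ≃L[ℂ] F) (x : F) :
    adjointEquiv U x = ContinuousLinearMap.adjoint (U : E →L[ℂ] F) x := rfl

set_option maxHeartbeats 1000000 in
theorem riesz_basis_characterization
    {H : Type*} [NormedAddCommGroup H] [InnerProductSpace ℂ H] [CompleteSpace H]
    [TopologicalSpace.SeparableSpace H] (f : ℕ → H) :
    IsRieszBasis f ↔
      (Dense (Submodule.span ℂ (Set.range f) : Set H) ∧
       (∀ g : H, Summable (fun n => ‖(inner ℂ g (f n) : ℂ)‖ ^ 2)) ∧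
       (∀ c : ℕ → ℂ, Summable (fun n => ‖c n‖ ^ 2) →
          ∃ g : H, ∀ n, (inner ℂ (f n) g : ℂ) = c n)) := by
  constructor
  · rintro ⟨e, T, hf⟩
    have hrange : Set.range f = ⇑T '' Set.range e := by
      ext x
      constructor
      · rintro ⟨n, rfl⟩; exact ⟨e n, ⟨n, rfl⟩, (hf n).symm⟩
      · rintro ⟨y, ⟨n, rfl⟩, rfl⟩; exact ⟨n, hf n⟩
    refine ⟨?_, ?_, ?_⟩
    · -- density
      have hde : Dense (Submodule.span ℂ (Set.range e) : Set H) := by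
        rw [Submodule.dense_iff_topologicalClosure_eq_top]
        exact e.dense_span
      have himg : Dense (⇑T '' (Submodule.span ℂ (Set.range e) : Set H)) :=
        T.surjective.denseRange.dense_image T.continuous hde
      have : (Submodule.span ℂ (Set.range f) : Set H)
          = ⇑T '' (Submodule.span ℂ (Set.range e) : Set H) := by
        rw [hrange]
        erw [← Submodule.map_span (T : H →ₗ[ℂ] H)]
        rfl
      rw [this]
      exact himg
    · -- square summability
      intro g
      set x := e.repr (ContinuousLinearMap.adjoint (T : H →L[ℂ] H) g) with hx
      have hxs : Summable fun n => ‖x n‖ ^ (2 : ENNReal).toReal :=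
        (lp.memℓp x).summable (by norm_num)
      refine hxs.congr fun n => ?_
      have h1 : x n = inner ℂ (f n) g := by
        rw [hx, HilbertBasis.repr_apply_apply, ContinuousLinearMap.adjoint_inner_right,
          hf n]
        rfl
      rw [rpow_toReal_two, h1, ← norm_inner_symm]
    · -- moment problem
      intro c hc
      have memc : Memℓp c 2 := memℓp_gen (by
        refine hc.congr fun n => ?_
        rw [rpow_toReal_two])
      set c' : lp (fun _ : ℕ => ℂ) 2 := ⟨c, memc⟩ with hc'
      set h : H := e.repr.symm c' with hh
      refine ⟨ContinuousLinearMap.adjoint (T.symm : H →L[ℂ] H) h, fun n => ?_⟩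
      rw [hf n, ContinuousLinearMap.adjoint_inner_right]
      have : (T.symm : H →L[ℂ] H) (T (e n)) = e n := by simp
      rw [this, ← HilbertBasis.repr_apply_apply, hh, LinearIsometryEquiv.apply_symm_apply]
  · rintro ⟨hdense, hsum, hmoment⟩
    -- the analysis operator as a linear map
    have mem : ∀ g : H, Memℓp (fun n => (inner ℂ (f n) g : ℂ)) 2 := fun g => by
      apply memℓp_gen
      refine (hsum g).congr fun n => ?_
      rw [rpow_toReal_two, norm_inner_symm]
    set A₀ : H →ₗ[ℂ] lp (fun _ : ℕ => ℂ) 2 :=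
      { toFun := fun g => ⟨fun n => (inner ℂ (f n) g : ℂ), mem g⟩
        map_add' := fun x y => by
          apply lp.ext
          funext n
          simp only [lp.coeFn_add, Pi.add_apply]
          exact inner_add_right _ _ _
        map_smul' := fun a x => by
          apply lp.ext
          funext n
          simp only [lp.coeFn_smul, Pi.smul_apply, RingHom.id_apply]
          exact inner_smul_right _ _ _ } with hA₀
    have hA₀app : ∀ (g : H) (n : ℕ), (A₀ g : ∀ _ : ℕ, ℂ) n = inner ℂ (f n) g := fun g n => rfl
    -- continuity via the closed graph theorem
    have Acont : Continuous A₀ := by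
      apply A₀.continuous_of_seq_closed_graph
      intro u x y hux huy
      apply lp.ext
      funext n
      have h1 : Filter.Tendsto (fun k => (A₀ (u k) : ∀ _ : ℕ, ℂ) n) Filter.atTop
          (nhds ((y : ∀ _ : ℕ, ℂ) n)) := by
        have : Filter.Tendsto (fun k => (A₀ (u k) : ∀ _ : ℕ, ℂ) n - (y : ∀ _ : ℕ, ℂ) n)
            Filter.atTop (nhds 0) := by
          have hb : ∀ k, ‖(A₀ (u k) : ∀ _ : ℕ, ℂ) n - (y : ∀ _ : ℕ, ℂ) n‖
              ≤ ‖A₀ (u k) - y‖ := by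
            intro k
            have := lp.norm_apply_le_norm (E := fun _ : ℕ => ℂ) two_ne_zero
              (A₀ (u k) - y) n
            simpa using this
          have h0 : Filter.Tendsto (fun k => ‖A₀ (u k) - y‖) Filter.atTop (nhds 0) := by
            rw [← tendsto_sub_nhds_zero_iff] at huy
            exact (tendsto_zero_iff_norm_tendsto_zero.mp huy)
          apply tendsto_zero_iff_norm_tendsto_zero.mpr
          exact squeeze_zero (fun k => norm_nonneg _) hb h0
        have := this.add_const ((y : ∀ _ : ℕ, ℂ) n)
        simpa using this
      have h2 : Filter.Tendsto (fun k => (A₀ (u k) : ∀ _ : ℕ, ℂ) n) Filter.atTop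
          (nhds (inner ℂ (f n) x)) := by
        simp only [hA₀app]
        exact (continuous_const.inner continuous_id).continuousAt.tendsto.comp hux
      exact tendsto_nhds_unique h1 h2
    set A : H →L[ℂ] lp (fun _ : ℕ => ℂ) 2 := ⟨A₀, Acont⟩ with hA
    -- injectivity
    have hker : LinearMap.ker (A : H →ₗ[ℂ] lp (fun _ : ℕ => ℂ) 2) = ⊥ := by
      rw [LinearMap.ker_eq_bot']
      intro g hg
      have hzero : ∀ n, (inner ℂ (f n) g : ℂ) = 0 := by
        intro n
        have : (A g : ∀ _ : ℕ, ℂ) n = 0 := by rw [show A g = 0 from hg]; rfl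
        exact this
      refine hdense.eq_zero_of_inner_right ℂ fun v hv => ?_
      refine Submodule.span_induction (p := fun v _ => (inner ℂ v g : ℂ) = 0) ?_ ?_ ?_ ?_ hv
      · rintro x ⟨n, rfl⟩; exact hzero n
      · exact inner_zero_left g
      · intro a b _ _ ha hb; rw [inner_add_left, ha, hb, add_zero]
      · intro a x _ hx; rw [inner_smul_left, hx, mul_zero]
    -- surjectivity
    have hrange : LinearMap.range (A : H →ₗ[ℂ] lp (fun _ : ℕ => ℂ) 2) = ⊤ := by
      rw [LinearMap.range_eq_top]
      intro y
      have hcsub : Summable fun n => ‖(y : ∀ _ : ℕ, ℂ) n‖ ^ 2 := by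
        have := (lp.memℓp y).summable (p := 2) (by norm_num)
        refine this.congr fun n => ?_
        rw [rpow_toReal_two]
      obtain ⟨g, hg⟩ := hmoment (fun n => (y : ∀ _ : ℕ, ℂ) n) hcsub
      refine ⟨g, ?_⟩
      apply lp.ext
      funext n
      exact hg n
    set U : H ≃L[ℂ] lp (fun _ : ℕ => ℂ) 2 :=
      ContinuousLinearEquiv.ofBijective A hker hrange with hU
    have hUapp : ∀ g : H, U g = A g := fun g => rfl
    -- a Hilbert basis of H indexed by ℕ
    obtain ⟨w, b, hb⟩ := exists_hilbertBasis ℂ H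
    haveI hcw : Countable w := by
      apply Pairwise.countable_of_isOpen_disjoint
        (s := fun i : w => Metric.ball (b i) 2⁻¹)
      · intro i j hij
        apply Metric.ball_disjoint_ball
        have hbij : (inner ℂ (b i) (b j) : ℂ) = 0 := b.orthonormal.2 hij
        have hni : ‖b i‖ = 1 := b.orthonormal.1 i
        have hnj : ‖b j‖ = 1 := b.orthonormal.1 j
        have hsq : ‖b i - b j‖ ^ 2 = 2 := by
          rw [@norm_sub_sq ℂ]
          rw [hbij, hni, hnj]
          norm_num
        have hdist : dist (b i) (b j) = ‖b i - b j‖ := dist_eq_norm _ _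
        rw [hdist]
        nlinarith [norm_nonneg (b i - b j)]
      · intro i; exact Metric.isOpen_ball
      · intro i; exact Metric.nonempty_ball.mpr (by norm_num)
    haveI hinfw : Infinite w := by
      by_contra hfin
      haveI hfw : Finite w := not_infinite_iff_finite.mp hfin
      have hfd : FiniteDimensional ℂ H := by
        have hfr : (Set.range ⇑b).Finite := Set.finite_range _
        haveI := FiniteDimensional.span_of_finite ℂ hfr
        have hclosed : IsClosed ((Submodule.span ℂ (Set.range ⇑b)) : Set H) :=
          Submodule.closed_of_finiteDimensional _
        have htop : Submodule.span ℂ (Set.range ⇑b) = ⊤ := by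
          have := b.dense_span
          rwa [hclosed.submodule_topologicalClosure_eq] at this
        have : FiniteDimensional ℂ (⊤ : Submodule ℂ H) := htop ▸
          inferInstanceAs (FiniteDimensional ℂ (Submodule.span ℂ (Set.range ⇑b)))
        exact (Submodule.topEquiv (R := ℂ) (M := H)).finiteDimensional
      -- transfer along U
      haveI : FiniteDimensional ℂ (lp (fun _ : ℕ => ℂ) 2) :=
        U.toLinearEquiv.finiteDimensional
      have κ : HilbertBasis ℕ ℂ (lp (fun _ : ℕ => ℂ) 2) := default
      exact Module.Finite.not_linearIndependent_of_infinite _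
        κ.orthonormal.linearIndependent
    haveI : Encodable w := Encodable.ofCountable _
    haveI : Denumerable w := Denumerable.ofEncodableOfInfinite _
    let σ : ℕ ≃ w := (Denumerable.eqv w).symm
    have horth : Orthonormal ℂ (⇑b ∘ σ) := b.orthonormal.comp σ σ.injective
    have hspan : ⊤ ≤ (Submodule.span ℂ (Set.range (⇑b ∘ σ))).topologicalClosure := by
      have : Set.range (⇑b ∘ σ) = Set.range ⇑b := by
        rw [Set.range_comp]
        rw [Set.range_eq_univ.mpr σ.surjective]
        simp
      rw [this, b.dense_span]
    let e : HilbertBasis ℕ ℂ H := HilbertBasis.mk horth hspan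
    -- the operator
    refine ⟨e, (e.repr.toContinuousLinearEquiv).trans (adjointEquiv U), fun n => ?_⟩
    have h1 : (e.repr.toContinuousLinearEquiv.trans (adjointEquiv U)) (e n)
        = adjointEquiv U (lp.single 2 n (1 : ℂ)) := by
      rw [ContinuousLinearEquiv.trans_apply]
      congr 1
      rw [LinearIsometryEquiv.coe_toContinuousLinearEquiv]
      exact e.repr_self n
    rw [h1, adjointEquiv_apply]
    apply ext_inner_right ℂ
    intro v
    rw [ContinuousLinearMap.adjoint_inner_left]
    have h2 : (inner ℂ (lp.single 2 n (1 : ℂ)) ((U : H →L[ℂ] lp (fun _ : ℕ => ℂ) 2) v) : ℂ)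
        = ((U : H →L[ℂ] lp (fun _ : ℕ => ℂ) 2) v : ∀ _ : ℕ, ℂ) n := by
      rw [lp.inner_single_left]
      simp [RCLike.inner_apply]
    rw [h2]
    exact (hA₀app v n).symm
end
end
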